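/- Let p be a prime, d ≥ 1, and R = (ZMod p)[X]/(X^{p^d} − X). The set B = {a ∈ R : a^p = a} of Frobenius-fixed elements is a (ZMod p)-subalgebra of R, and its dimension satisfies d · finrank (ZMod p) B = Σ_{k ∣ d} φ(k) · p^{d/k}, the sum over positive divisors k of d with φ the Euler totient function. Moreover, finrank (ZMod p) B equals the number of monic irreducible polynomials in (ZMod p)[X] whose degree divides d. -/

import Mathlib

open Polynomial UniqueFactorizationMonoid

set_option maxHeartbeats 1000000
set_option synthInstance.maxHeartbeats 200000
set_option linter.unusedSectionVars false

namespace Stmt9Aux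


variable (p : ℕ) [Fact p.Prime]

theorem two_le_ppow (n : ℕ) (hn : n ≠ 0) : 2 ≤ p ^ n :=
  (Fact.out (p := p.Prime)).two_le.trans (Nat.le_self_pow hn p)

theorem fmonic (n : ℕ) (hn : n ≠ 0) : (X ^ p ^ n - X : (ZMod p)[X]).Monic := by
  refine Polynomial.monic_X_pow_sub ?_
  rw [degree_X]
  exact_mod_cast Nat.one_lt_cast.mpr (two_le_ppow p n hn)

theorem fne (n : ℕ) (hn : n ≠ 0) : (X ^ p ^ n - X : (ZMod p)[X]) ≠ 0 :=
  (fmonic p n hn).ne_zero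

theorem fdeg (n : ℕ) (hn : n ≠ 0) : (X ^ p ^ n - X : (ZMod p)[X]).natDegree = p ^ n :=
  FiniteField.X_pow_card_pow_sub_X_natDegree_eq _ hn (Fact.out (p := p.Prime)).one_lt

theorem fsep (n : ℕ) (hn : n ≠ 0) : (X ^ p ^ n - X : (ZMod p)[X]).Separable :=
  galois_poly_separable p (p ^ n) (dvd_pow_self p hn)



variable (p : ℕ) [Fact p.Prime]

theorem pow_pow_fix {K : Type*} [Monoid K] {a : K} {m : ℕ} (h : a ^ p ^ m = a) (k : ℕ) :
    a ^ p ^ (m * k) = a := by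
  induction k with
  | zero => simp
  | succ k ih => rw [Nat.mul_succ, pow_add, pow_mul, ih, h]

theorem dvd_iff (n : ℕ) (hn : n ≠ 0) {g : (ZMod p)[X]} (hgm : g.Monic) (hgi : Irreducible g) :
    g ∣ (X ^ p ^ n - X) ↔ g.natDegree ∣ n := by
  have hp1 : 1 < p := (Fact.out (p := p.Prime)).one_lt
  haveI := Fact.mk hgi
  have hg0 : g ≠ 0 := hgm.ne_zero
  obtain ⟨m, hm⟩ : ∃ m, g.natDegree = m := ⟨_, rfl⟩
  rw [hm]
  have hm0 : 0 < m := hm ▸ hgi.natDegree_pos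
  have hmin : minpoly (ZMod p) (AdjoinRoot.root g) = g := by
    rw [AdjoinRoot.minpoly_root hg0, hgm.leadingCoeff, inv_one, map_one, mul_one]
  have hdvd : g ∣ (X ^ p ^ n - X) ↔ (AdjoinRoot.root g) ^ p ^ n = AdjoinRoot.root g := by
    conv_lhs => rw [← hmin]
    rw [minpoly.dvd_iff, map_sub, map_pow, aeval_X, sub_eq_zero]
  haveI : Module.Finite (ZMod p) (AdjoinRoot g) :=
    Module.Finite.of_basis (AdjoinRoot.powerBasis hg0).basis
  haveI : Finite (AdjoinRoot g) := Module.finite_of_finite (ZMod p)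
  haveI : Fintype (AdjoinRoot g) := Fintype.ofFinite _
  have hfr : Module.finrank (ZMod p) (AdjoinRoot g) = m := by
    rw [(AdjoinRoot.powerBasis hg0).finrank, AdjoinRoot.powerBasis_dim, hm]
  have hcard : Fintype.card (AdjoinRoot g) = p ^ m := by
    rw [Module.card_eq_pow_finrank (K := ZMod p), ZMod.card, hfr]
  haveI : CharP (AdjoinRoot g) p :=
    charP_of_injective_algebraMap (algebraMap (ZMod p) (AdjoinRoot g)).injective p
  have hpc : ∀ x : AdjoinRoot g, x ^ p ^ m = x := fun x => by
    rw [← hcard]; exact FiniteField.pow_card x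
  rw [hdvd]
  constructor
  · intro hroot
    have hall : ∀ x : AdjoinRoot g, x ^ p ^ n = x := by
      intro x
      have hx : x ∈ Algebra.adjoin (ZMod p) ({AdjoinRoot.root g} : Set (AdjoinRoot g)) := by
        rw [AdjoinRoot.adjoinRoot_eq_top]; trivial
      induction hx using Algebra.adjoin_induction with
      | mem y hy => rw [Set.mem_singleton_iff] at hy; rw [hy]; exact hroot
      | algebraMap c => rw [← map_pow, ZMod.pow_card_pow]
      | add x y _ _ hx hy => rw [add_pow_char_pow, hx, hy]
      | mul x y _ _ hx hy => rw [mul_pow, hx, hy]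
    have hallr : ∀ x : AdjoinRoot g, x ^ p ^ (n % m) = x := by
      intro x
      calc x ^ p ^ (n % m) = (x ^ p ^ (m * (n / m))) ^ p ^ (n % m) := by
            rw [pow_pow_fix p (hpc x) (n / m)]
        _ = x ^ (p ^ (m * (n / m)) * p ^ (n % m)) := (pow_mul x _ _).symm
        _ = x ^ p ^ (m * (n / m) + n % m) := by rw [← pow_add]
        _ = x ^ p ^ n := by rw [Nat.div_add_mod]
        _ = x := hall x
    by_contra hnd
    have hr : n % m ≠ 0 := fun h => hnd (Nat.dvd_of_mod_eq_zero h)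
    classical
    have hne : (X ^ p ^ (n % m) - X : (AdjoinRoot g)[X]) ≠ 0 :=
      FiniteField.X_pow_card_pow_sub_X_ne_zero _ hr hp1
    have hsub : (Finset.univ : Finset (AdjoinRoot g)) ⊆
        (X ^ p ^ (n % m) - X : (AdjoinRoot g)[X]).roots.toFinset := by
      intro x _
      rw [Multiset.mem_toFinset, mem_roots hne]
      simp [IsRoot, sub_eq_zero, hallr x]
    have hineq : Fintype.card (AdjoinRoot g) ≤ p ^ (n % m) := by
      calc Fintype.card (AdjoinRoot g) = (Finset.univ : Finset (AdjoinRoot g)).card :=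
            (Finset.card_univ).symm
        _ ≤ (X ^ p ^ (n % m) - X : (AdjoinRoot g)[X]).roots.toFinset.card :=
            Finset.card_le_card hsub
        _ ≤ Multiset.card (X ^ p ^ (n % m) - X : (AdjoinRoot g)[X]).roots :=
            Multiset.toFinset_card_le _
        _ ≤ (X ^ p ^ (n % m) - X : (AdjoinRoot g)[X]).natDegree := card_roots' _
        _ = p ^ (n % m) :=
            FiniteField.X_pow_card_pow_sub_X_natDegree_eq _ hr hp1
    rw [hcard] at hineq
    exact absurd hineq (not_le.mpr (Nat.pow_lt_pow_right hp1 (Nat.mod_lt n hm0)))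
  · rintro ⟨k, rfl⟩
    exact pow_pow_fix p (hpc _) k









noncomputable def Sirr (n : ℕ) : Finset (ZMod p)[X] :=
  (normalizedFactors (X ^ p ^ n - X : (ZMod p)[X])).toFinset


theorem mem_Sirr {n : ℕ} (hn : n ≠ 0) {g : (ZMod p)[X]} :
    g ∈ Sirr p n ↔ g.Monic ∧ Irreducible g ∧ g.natDegree ∣ n := by
  rw [Sirr, Multiset.mem_toFinset]
  constructor
  · intro hg
    have hirr : Irreducible g := irreducible_of_normalized_factor g hg
    have hmon : g.Monic := by
      have := normalize_normalized_factor g hg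
      rw [← this]
      exact monic_normalize hirr.ne_zero
    exact ⟨hmon, hirr, (dvd_iff p n hn hmon hirr).mp (dvd_of_mem_normalizedFactors hg)⟩
  · rintro ⟨hmon, hirr, hdeg⟩
    have hdvd : g ∣ (X ^ p ^ n - X) := (dvd_iff p n hn hmon hirr).mpr hdeg
    have hdvd2 : g ∣ (normalizedFactors (X ^ p ^ n - X : (ZMod p)[X])).prod :=
      hdvd.trans (prod_normalizedFactors (fne p n hn)).symm.dvd
    obtain ⟨b, hb, hgb⟩ := hirr.prime.exists_mem_multiset_dvd hdvd2
    have hbirr : Irreducible b := irreducible_of_normalized_factor b hb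
    have hbmon : b.Monic := by
      have := normalize_normalized_factor b hb
      rw [← this]; exact monic_normalize hbirr.ne_zero
    have : g = b := eq_of_monic_of_associated hmon hbmon (hirr.associated_of_dvd hbirr hgb)
    rwa [this]

theorem nodup_Sirr (n : ℕ) (hn : n ≠ 0) :
    (normalizedFactors (X ^ p ^ n - X : (ZMod p)[X])).Nodup :=
  (squarefree_iff_nodup_normalizedFactors (fne p n hn)).mp (fsep p n hn).squarefree

theorem prod_Sirr (n : ℕ) (hn : n ≠ 0) :
    ∏ g ∈ Sirr p n, g = (X ^ p ^ n - X : (ZMod p)[X]) := by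
  have hval : (Sirr p n).val = normalizedFactors (X ^ p ^ n - X : (ZMod p)[X]) :=
    (Multiset.toFinset_val _).trans (Multiset.dedup_eq_self.mpr (nodup_Sirr p n hn))
  have h1 : ∏ g ∈ Sirr p n, g
      = (normalizedFactors (X ^ p ^ n - X : (ZMod p)[X])).prod := by
    rw [Finset.prod, hval, Multiset.map_id']
  rw [h1]
  refine eq_of_monic_of_associated ?_ (fmonic p n hn) (prod_normalizedFactors (fne p n hn))
  have h2 : (normalizedFactors (X ^ p ^ n - X : (ZMod p)[X])).prod
      = ((normalizedFactors (X ^ p ^ n - X : (ZMod p)[X])).map id).prod := by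
    rw [Multiset.map_id]
  rw [h2]
  refine monic_multiset_prod_of_monic _ id (fun g hg => ?_)
  have hgs : g ∈ Sirr p n := by rw [Sirr, Multiset.mem_toFinset]; exact hg
  exact ((mem_Sirr p hn).mp hgs).1

theorem degsum (n : ℕ) (hn : n ≠ 0) :
    ∑ g ∈ Sirr p n, g.natDegree = p ^ n := by
  have := natDegree_prod (R := ZMod p) (s := Sirr p n) (f := id) ?_
  · rw [← fdeg p n hn, ← prod_Sirr p n hn]
    simpa using this.symm
  · intro g hg
    exact ((mem_Sirr p hn).mp hg).2.1.ne_zero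

noncomputable def Eirr (m : ℕ) : Finset (ZMod p)[X] :=
  (Sirr p m).filter (fun g => g.natDegree = m)

theorem Eirr_def (m : ℕ) : Eirr p m = (Sirr p m).filter (fun g => g.natDegree = m) := rfl

theorem deg_of_mem_Eirr {m : ℕ} {g : (ZMod p)[X]} (hg : g ∈ Eirr p m) : g.natDegree = m := by
  rw [Eirr_def] at hg
  exact (Finset.mem_filter.mp hg).2

theorem mem_Eirr {m : ℕ} (hm : m ≠ 0) {g : (ZMod p)[X]} :
    g ∈ Eirr p m ↔ g.Monic ∧ Irreducible g ∧ g.natDegree = m := by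
  rw [Eirr_def, Finset.mem_filter, mem_Sirr p hm]
  constructor
  · rintro ⟨⟨h1, h2, _⟩, h4⟩; exact ⟨h1, h2, h4⟩
  · rintro ⟨h1, h2, h4⟩; exact ⟨⟨h1, h2, h4 ▸ dvd_refl m⟩, h4⟩

theorem partition_Sirr (n : ℕ) (hn : n ≠ 0) :
    Sirr p n = n.divisors.biUnion (fun m => Eirr p m) := by
  ext g
  rw [mem_Sirr p hn, Finset.mem_biUnion]
  constructor
  · rintro ⟨h1, h2, h3⟩
    refine ⟨g.natDegree, Nat.mem_divisors.mpr ⟨h3, hn⟩, ?_⟩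
    rw [mem_Eirr p h2.natDegree_pos.ne']
    exact ⟨h1, h2, rfl⟩
  · rintro ⟨m, hm, hg⟩
    have hm0 : m ≠ 0 := (Nat.pos_of_mem_divisors hm).ne'
    obtain ⟨h1, h2, h3⟩ := (mem_Eirr p hm0).mp hg
    exact ⟨h1, h2, h3 ▸ (Nat.mem_divisors.mp hm).1⟩

theorem disj_Eirr (n : ℕ) :
    Set.PairwiseDisjoint (↑n.divisors) (fun m => Eirr p m) := by
  intro a ha b hb hab
  refine Finset.disjoint_left.mpr (fun g hga hgb => hab ?_)
  rw [← deg_of_mem_Eirr p hga, deg_of_mem_Eirr p hgb]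

theorem sum_deg_divisors (n : ℕ) (hn : n ≠ 0) :
    ∑ m ∈ n.divisors, m * (Eirr p m).card = p ^ n := by
  rw [← degsum p n hn, partition_Sirr p n hn, Finset.sum_biUnion (disj_Eirr p n)]
  refine Finset.sum_congr rfl (fun m hm => ?_)
  have h : ∑ g ∈ Eirr p m, g.natDegree = ∑ _g ∈ Eirr p m, m :=
    Finset.sum_congr rfl (fun g hg => deg_of_mem_Eirr p hg)
  rw [h, Finset.sum_const, smul_eq_mul, mul_comm]

theorem card_Sirr_eq (n : ℕ) (hn : n ≠ 0) :
    (Sirr p n).card = ∑ m ∈ n.divisors, (Eirr p m).card := by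
  rw [partition_Sirr p n hn, Finset.card_biUnion]
  intro a ha b hb hab
  exact disj_Eirr p n ha hb hab

theorem sum_swap_divisors (d : ℕ) (F : ℕ → ℕ → ℕ) :
    ∑ k ∈ d.divisors, ∑ m ∈ (d / k).divisors, F k m
      = ∑ m ∈ d.divisors, ∑ k ∈ (d / m).divisors, F k m := by
  rw [Finset.sum_sigma', Finset.sum_sigma']
  refine Finset.sum_nbij' (fun x => ⟨x.2, x.1⟩) (fun x => ⟨x.2, x.1⟩) ?_ ?_ ?_ ?_ ?_
  · rintro ⟨k, m⟩ hx
    rw [Finset.mem_sigma, Nat.mem_divisors, Nat.mem_divisors] at hx ⊢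
    obtain ⟨⟨hk, hd⟩, hm, hdk⟩ := hx
    have hmd : m ∣ d := hm.trans (Nat.div_dvd_of_dvd hk)
    have hm0 : m ≠ 0 := fun h => hd (by simpa [h] using hmd)
    refine ⟨⟨hmd, hd⟩, ?_,
      (Nat.div_pos (Nat.le_of_dvd (Nat.pos_of_ne_zero hd) hmd) (Nat.pos_of_ne_zero hm0)).ne'⟩
    rw [Nat.dvd_div_iff_mul_dvd hmd, mul_comm, ← Nat.dvd_div_iff_mul_dvd hk]
    exact hm
  · rintro ⟨k, m⟩ hx
    rw [Finset.mem_sigma, Nat.mem_divisors, Nat.mem_divisors] at hx ⊢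
    obtain ⟨⟨hk, hd⟩, hm, hdk⟩ := hx
    have hmd : m ∣ d := hm.trans (Nat.div_dvd_of_dvd hk)
    have hm0 : m ≠ 0 := fun h => hd (by simpa [h] using hmd)
    refine ⟨⟨hmd, hd⟩, ?_,
      (Nat.div_pos (Nat.le_of_dvd (Nat.pos_of_ne_zero hd) hmd) (Nat.pos_of_ne_zero hm0)).ne'⟩
    rw [Nat.dvd_div_iff_mul_dvd hmd, mul_comm, ← Nat.dvd_div_iff_mul_dvd hk]
    exact hm
  · rintro ⟨k, m⟩ _; rfl
  · rintro ⟨k, m⟩ _; rfl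
  · rintro ⟨k, m⟩ _; rfl

theorem totient_identity (d : ℕ) (hd : d ≠ 0) :
    ∑ k ∈ d.divisors, Nat.totient k * p ^ (d / k) = d * (Sirr p d).card := by
  have h1 : ∀ k ∈ d.divisors, Nat.totient k * p ^ (d / k)
      = ∑ m ∈ (d / k).divisors, Nat.totient k * (m * (Eirr p m).card) := by
    intro k hk
    have hk0 : (d / k) ≠ 0 := by
      obtain ⟨hkd, _⟩ := Nat.mem_divisors.mp hk
      exact (Nat.div_pos (Nat.le_of_dvd (Nat.pos_of_ne_zero hd) hkd)
        (Nat.pos_of_mem_divisors hk)).ne'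
    rw [← sum_deg_divisors p (d / k) hk0, Finset.mul_sum]
  rw [Finset.sum_congr rfl h1, sum_swap_divisors]
  have h2 : ∀ m ∈ d.divisors, ∑ k ∈ (d / m).divisors, Nat.totient k * (m * (Eirr p m).card)
      = d * (Eirr p m).card := by
    intro m hm
    rw [← Finset.sum_mul, Nat.sum_totient, ← mul_assoc,
      Nat.div_mul_cancel (Nat.mem_divisors.mp hm).1]
  rw [Finset.sum_congr rfl h2, ← Finset.mul_sum, card_Sirr_eq p d hd]



theorem field_fix (K : Type*) [Field K] [Algebra (ZMod p) K] [Finite K] :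
    Nat.card {x : K // x ^ p = x} = p := by
  classical
  have hp1 : 1 < p := (Fact.out (p := p.Prime)).one_lt
  haveI : Fintype K := Fintype.ofFinite K
  haveI : CharP K p := charP_of_injective_algebraMap (algebraMap (ZMod p) K).injective p
  refine le_antisymm ?_ ?_
  · -- at most p: they are roots of X^p - X
    have hne : (X ^ p - X : K[X]) ≠ 0 := FiniteField.X_pow_card_sub_X_ne_zero K hp1
    have : Nat.card {x : K // x ^ p = x}
        ≤ Nat.card {x : K // x ∈ (X ^ p - X : K[X]).roots.toFinset} := by
      refine Nat.card_le_card_of_injective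
        (fun x => ⟨x.1, by
          rw [Multiset.mem_toFinset, mem_roots hne]
          simp [IsRoot, sub_eq_zero, x.2]⟩)
        (fun a b hab => Subtype.ext (by simpa using hab))
    refine this.trans ?_
    rw [Nat.card_eq_fintype_card, Fintype.card_coe]
    calc (X ^ p - X : K[X]).roots.toFinset.card
        ≤ Multiset.card (X ^ p - X : K[X]).roots := Multiset.toFinset_card_le _
      _ ≤ (X ^ p - X : K[X]).natDegree := card_roots' _
      _ = p := FiniteField.X_pow_card_sub_X_natDegree_eq K hp1
  · -- at least p : image of ZMod p
    have : Nat.card (ZMod p) ≤ Nat.card {x : K // x ^ p = x} := by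
      refine Nat.card_le_card_of_injective
        (fun c => ⟨algebraMap (ZMod p) K c, by rw [← map_pow, ZMod.pow_card]⟩) ?_
      intro a b hab
      exact (algebraMap (ZMod p) K).injective (by simpa using hab)
    simpa [Nat.card_zmod] using this










/-- the subalgebra of Frobenius-fixed points -/
def fixedSub (A : Type*) [CommRing A] [Algebra (ZMod p) A] [CharP A p] :
    Subalgebra (ZMod p) A where
  carrier := {a : A | a ^ p = a}
  mul_mem' {a b} ha hb := by
    have ha' : a ^ p = a := ha
    have hb' : b ^ p = b := hb
    show (a * b) ^ p = a * b
    rw [mul_pow, ha', hb']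
  one_mem' := one_pow p
  add_mem' {a b} ha hb := by
    have ha' : a ^ p = a := ha
    have hb' : b ^ p = b := hb
    show (a + b) ^ p = a + b
    rw [add_pow_char, ha', hb']
  algebraMap_mem' c := by
    show (algebraMap (ZMod p) A c) ^ p = algebraMap (ZMod p) A c
    rw [← map_pow, ZMod.pow_card]

end Stmt9Aux

open Stmt9Aux

theorem stmt9 (p : ℕ) [Fact p.Prime] (d : ℕ) (hd : 1 ≤ d) :
    ∃ B : Subalgebra (ZMod p)
        (Polynomial (ZMod p) ⧸ Ideal.span {(X : Polynomial (ZMod p)) ^ p ^ d - X}),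
      (B : Set (Polynomial (ZMod p) ⧸
          Ideal.span {(X : Polynomial (ZMod p)) ^ p ^ d - X})) = {a | a ^ p = a} ∧
      d * Module.finrank (ZMod p) B =
        ∑ k ∈ d.divisors, Nat.totient k * p ^ (d / k) ∧
      Module.finrank (ZMod p) B =
        Nat.card {m : Polynomial (ZMod p) //
          m.Monic ∧ Irreducible m ∧ m.natDegree ∣ d} := by
  classical
  have hd0 : d ≠ 0 := Nat.one_le_iff_ne_zero.mp hd
  have hp1 : 1 < p := (Fact.out (p := p.Prime)).one_lt
  set f : (ZMod p)[X] := X ^ p ^ d - X with hfdef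
  have hf0 : f ≠ 0 := fne p d hd0
  haveI : Module.Finite (ZMod p) (AdjoinRoot f) :=
    Module.Finite.of_basis (AdjoinRoot.powerBasis hf0).basis
  haveI : Finite (AdjoinRoot f) := Module.finite_of_finite (ZMod p)
  haveI : Nontrivial (AdjoinRoot f) := by
    refine AdjoinRoot.nontrivial f ?_
    rw [degree_eq_natDegree hf0, fdeg p d hd0]
    exact_mod_cast pow_ne_zero d (by omega : p ≠ 0)
  haveI : CharP (AdjoinRoot f) p :=
    charP_of_injective_algebraMap (algebraMap (ZMod p) (AdjoinRoot f)).injective p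
  haveI : Finite (Polynomial (ZMod p) ⧸ Ideal.span {f}) := ‹Finite (AdjoinRoot f)›
  haveI : Module.Finite (ZMod p) (Polynomial (ZMod p) ⧸ Ideal.span {f}) :=
    ‹Module.Finite (ZMod p) (AdjoinRoot f)›
  -- the CRT decomposition
  set ι := {g : (ZMod p)[X] // g ∈ Sirr p d} with hι
  have memfacts : ∀ i : ι, (i.1).Monic ∧ Irreducible (i.1) ∧ (i.1).natDegree ∣ d :=
    fun i => (mem_Sirr p hd0).mp i.2
  have hcopel : ∀ i j : ι, i ≠ j → IsCoprime (i.1 : (ZMod p)[X]) j.1 := by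
    intro i j hij
    rw [(memfacts i).2.1.coprime_iff_not_dvd]
    intro hdvd
    exact hij (Subtype.ext (eq_of_monic_of_associated (memfacts i).1 (memfacts j).1
      ((memfacts i).2.1.associated_of_dvd (memfacts j).2.1 hdvd)))
  have hcop : Pairwise (Function.onFun IsCoprime
      (fun i : ι => Ideal.span {(i.1 : (ZMod p)[X])})) := by
    intro i j hij
    rw [Function.onFun, Ideal.isCoprime_span_singleton_iff]
    exact hcopel i j hij
  have hspan : Ideal.span {f} = ⨅ i : ι, Ideal.span {(i.1 : (ZMod p)[X])} := by
    rw [Ideal.iInf_span_singleton (I := fun i : ι => (i.1 : (ZMod p)[X]))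
      (fun i j hij => hcopel i j hij)]
    rw [Finset.prod_coe_sort (Sirr p d) (fun g => g), prod_Sirr p d hd0]
  have e : AdjoinRoot f ≃+* (Π i : ι, AdjoinRoot (i.1 : (ZMod p)[X])) :=
    (Ideal.quotEquivOfEq hspan).trans
      (Ideal.quotientInfRingEquivPiQuotient _ hcop)
  -- counting fixed points
  have hcount : Nat.card {a : AdjoinRoot f // a ^ p = a} = p ^ (Sirr p d).card := by
    have e1 : {a : AdjoinRoot f // a ^ p = a}
        ≃ {b : Π i : ι, AdjoinRoot (i.1 : (ZMod p)[X]) // b ^ p = b} :=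
      e.toEquiv.subtypeEquiv (fun a =>
        ⟨fun h => by show (e a) ^ p = e a; rw [← map_pow, h],
         fun h => e.injective (by rw [map_pow]; exact h)⟩)
    have e2 : {b : Π i : ι, AdjoinRoot (i.1 : (ZMod p)[X]) // b ^ p = b}
        ≃ Π i : ι, {x : AdjoinRoot (i.1 : (ZMod p)[X]) // x ^ p = x} :=
      (Equiv.subtypeEquivRight (fun b => by
        rw [funext_iff]
        exact forall_congr' fun i => Iff.rfl)).trans
        (Equiv.subtypePiEquivPi)
    rw [Nat.card_congr (e1.trans e2), Nat.card_pi]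
    have hone : ∀ i : ι, Nat.card {x : AdjoinRoot (i.1 : (ZMod p)[X]) // x ^ p = x} = p := by
      intro i
      haveI := Fact.mk (memfacts i).2.1
      haveI : Module.Finite (ZMod p) (AdjoinRoot (i.1 : (ZMod p)[X])) :=
        Module.Finite.of_basis (AdjoinRoot.powerBasis (memfacts i).1.ne_zero).basis
      haveI : Finite (AdjoinRoot (i.1 : (ZMod p)[X])) := Module.finite_of_finite (ZMod p)
      exact field_fix p _
    rw [Finset.prod_congr rfl (fun i _ => hone i), Finset.prod_const, Finset.card_univ,
      Fintype.card_coe]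
  -- conclude
  set B : Subalgebra (ZMod p) (Polynomial (ZMod p) ⧸ Ideal.span {f}) :=
    fixedSub p (AdjoinRoot f) with hB
  have hcardB : Nat.card B = p ^ (Sirr p d).card := by
    rw [← hcount]
    exact Nat.card_congr (Equiv.subtypeEquivRight fun a => Iff.rfl)
  have hfrank : Module.finrank (ZMod p) B = (Sirr p d).card := by
    haveI : Fintype B := Fintype.ofFinite _
    have h := Module.card_eq_pow_finrank (K := ZMod p) (V := B)
    rw [ZMod.card] at h
    rw [Nat.card_eq_fintype_card, h] at hcardB
    exact Nat.pow_right_injective (Fact.out (p := p.Prime)).two_le hcardB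
  refine ⟨B, rfl, ?_, ?_⟩
  · rw [hfrank, totient_identity p d hd0]
  · rw [hfrank]
    have h2 : Nat.card {m : (ZMod p)[X] // m.Monic ∧ Irreducible m ∧ m.natDegree ∣ d}
        = Nat.card ι :=
      Nat.card_congr (Equiv.subtypeEquivRight fun g => (mem_Sirr p hd0).symm)
    rw [h2, Nat.card_eq_fintype_card, Fintype.card_coe]
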